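/- arXiv:2212.09141 — 2 statements merged into one kernel-verified Lean document; each statement's English description precedes it below -/
import Mathlib

section
/- Let r ∈ ℕ_0 and γ ∈ ℝ^{r+1}. If there exist d ∈ (0,1) and M > 0 such that P_γ(z) ≤ M for all z ∈ (0,d) (with d small enough that all ℓ_j(z) > 1 for 1 ≤ j ≤ r on (0,d)), then P_γ(z) converges to a real limit as z → 0+; moreover this limit equals 1 if γ = 0 and equals 0 otherwise. In particular, if c ∈ ℝ \ {0} is such that c·P_γ(z) ∈ [−1,1] for all z ∈ (0,d), then lim_{z→0+} P_γ(z) exists in ℝ. -/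
open Real Filter Topology

/-- Iterated logarithms: `ell 0 z = z`, `ell 1 z = -log z`,
`ell (j+1) z = log (ell j z)` for `j ≥ 1`. -/
noncomputable def ell : ℕ → ℝ → ℝ
  | 0, z => z
  | 1, z => -Real.log z
  | (n+2), z => Real.log (ell (n+1) z)

/-- The scale monomial `P_γ(z) = ∏_{j=0}^r ℓ_j(z)^{γ_j}` (real-exponent powers). -/
noncomputable def Pgamma (r : ℕ) (γ : ℕ → ℝ) (z : ℝ) : ℝ :=
  ∏ j ∈ Finset.range (r+1), (ell j z) ^ (γ j)

private lemma ell_succ_tendsto : ∀ n : ℕ, Tendsto (ell (n+1)) (𝓝[>] (0:ℝ)) atTop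
  | 0 => tendsto_neg_atBot_atTop.comp Real.tendsto_log_nhdsGT_zero
  | (n+1) => Real.tendsto_log_atTop.comp (ell_succ_tendsto n)

private lemma factor_bound {b t g C : ℝ} (hb : 1 ≤ b) (ht1 : 1 ≤ t) (htb : t ≤ b)
    (hC : |g| ≤ C) : b ^ (-C) ≤ t ^ g ∧ t ^ g ≤ b ^ C := by
  have ht0 : (0:ℝ) ≤ t := zero_le_one.trans ht1
  have hC0 : 0 ≤ C := (abs_nonneg g).trans hC
  rcases le_or_gt 0 g with hg | hg
  · constructor
    · calc b ^ (-C) ≤ 1 := Real.rpow_le_one_of_one_le_of_nonpos hb (neg_nonpos.2 hC0)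
        _ ≤ t ^ g := Real.one_le_rpow ht1 hg
    · calc t ^ g ≤ b ^ g := Real.rpow_le_rpow ht0 htb hg
        _ ≤ b ^ C := Real.rpow_le_rpow_of_exponent_le hb ((le_abs_self g).trans hC)
  · have hgC : -C ≤ g := by
      have : -g ≤ C := by rwa [abs_of_neg hg] at hC
      linarith
    constructor
    · calc b ^ (-C) ≤ b ^ g := Real.rpow_le_rpow_of_exponent_le hb hgC
        _ ≤ t ^ g := Real.rpow_le_rpow_of_nonpos (zero_lt_one.trans_le ht1) htb hg.le
    · calc t ^ g ≤ 1 := Real.rpow_le_one_of_one_le_of_nonpos ht1 hg.le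
        _ ≤ b ^ C := Real.one_le_rpow hb hC0

private lemma Pgamma_decomp (r k : ℕ) (γ : ℕ → ℝ) (z : ℝ) (hk : k ≤ r)
    (h0 : ∀ j < k, γ j = 0) :
    Pgamma r γ z =
      (∏ i ∈ Finset.range (r - k), (ell (k+1+i) z) ^ (γ (k+1+i))) * (ell k z) ^ (γ k) := by
  have h1 : Pgamma r γ z = ∏ j ∈ Finset.Ico k (r+1), (ell j z) ^ (γ j) := by
    rw [Pgamma, Finset.range_eq_Ico]
    refine (Finset.prod_subset (Finset.Ico_subset_Ico (Nat.zero_le k) le_rfl) ?_).symm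
    intro x hx hnx
    simp only [Finset.mem_Ico] at hx hnx
    have : x < k := by omega
    rw [h0 x this, Real.rpow_zero]
  rw [h1, Finset.prod_Ico_eq_prod_range]
  have e : r + 1 - k = (r - k) + 1 := by omega
  rw [e, Finset.prod_range_succ']
  congr 1
  refine Finset.prod_congr rfl fun i _ => ?_
  rw [show k + (i+1) = k+1+i from by omega]

private lemma log_le_rpow_event (n : ℕ) {δ : ℝ} (hδ : 0 < δ) :
    ∀ᶠ z in 𝓝[>] (0:ℝ), ell (n+2) z ≤ (ell (n+1) z) ^ δ := by
  have h1 : ∀ᶠ x : ℝ in atTop, Real.log x ≤ x ^ δ := by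
    filter_upwards [(isLittleO_log_rpow_atTop hδ).def one_pos,
      eventually_gt_atTop (0:ℝ)] with x hx hx0
    calc Real.log x ≤ |Real.log x| := le_abs_self _
      _ ≤ 1 * |x ^ δ| := by simpa [Real.norm_eq_abs] using hx
      _ = x ^ δ := by rw [one_mul, abs_of_nonneg (Real.rpow_nonneg hx0.le _)]
  exact (ell_succ_tendsto n).eventually h1

private lemma ell_chain (n : ℕ) : ∀ m : ℕ, ∀ᶠ z in 𝓝[>] (0:ℝ), ell (n+1+m) z ≤ ell (n+1) z
  | 0 => Eventually.of_forall fun z => le_rfl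
  | (m+1) => by
    have h1 := ell_chain n m
    have h2 : ∀ᶠ z in 𝓝[>] (0:ℝ), ell (n+m+2) z ≤ ell (n+m+1) z := by
      filter_upwards [(ell_succ_tendsto (n+m)).eventually_gt_atTop 1] with z hz
      calc ell (n+m+2) z = Real.log (ell (n+m+1) z) := rfl
        _ ≤ ell (n+m+1) z := Real.log_le_self (by linarith)
    rw [show n+1+(m+1) = n+m+2 from by omega]
    rw [show n+1+m = n+m+1 from by omega] at h1
    filter_upwards [h1, h2] with z hz1 hz2
    exact hz2.trans hz1

private lemma Q_bound (r k : ℕ) (γ : ℕ → ℝ) {C : ℝ} (hC : ∀ j ≤ r, |γ j| ≤ C)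
    (hC0 : 0 ≤ C) :
    ∀ᶠ z in 𝓝[>] (0:ℝ),
      (ell (k+1) z) ^ (-(C*r)) ≤ (∏ i ∈ Finset.range (r - k), (ell (k+1+i) z) ^ (γ (k+1+i))) ∧
      (∏ i ∈ Finset.range (r - k), (ell (k+1+i) z) ^ (γ (k+1+i))) ≤ (ell (k+1) z) ^ (C*r) := by
  have hall : ∀ᶠ z in 𝓝[>] (0:ℝ), ∀ i ∈ Finset.range (r - k),
      1 < ell (k+1+i) z ∧ ell (k+1+i) z ≤ ell (k+1) z := by
    refine (Filter.eventually_all_finset _).2 fun i _ => ?_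
    have ht : Tendsto (ell (k+1+i)) (𝓝[>] (0:ℝ)) atTop := by
      rw [show k+1+i = (k+i)+1 from by omega]; exact ell_succ_tendsto (k+i)
    exact (ht.eventually_gt_atTop 1).and (ell_chain k i)
  filter_upwards [(ell_succ_tendsto k).eventually_gt_atTop 1, hall] with z hbz hallz
  have hb0 : (0:ℝ) < ell (k+1) z := one_pos.trans hbz
  have hb1 : (1:ℝ) ≤ ell (k+1) z := hbz.le
  have hCj : ∀ i ∈ Finset.range (r - k), |γ (k+1+i)| ≤ C := fun i hi => by
    refine hC _ ?_
    have := Finset.mem_range.1 hi; omega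
  have hcast : ((r - k : ℕ) : ℝ) ≤ (r : ℝ) := Nat.cast_le.2 (Nat.sub_le r k)
  constructor
  · calc (ell (k+1) z) ^ (-(C*r))
        ≤ (ell (k+1) z) ^ (-(C*((r-k:ℕ):ℝ))) := by
          refine Real.rpow_le_rpow_of_exponent_le hb1 ?_
          have := mul_le_mul_of_nonneg_left hcast hC0; linarith
      _ = ((ell (k+1) z) ^ (-C)) ^ ((r-k : ℕ)) := by
          rw [← Real.rpow_natCast ((ell (k+1) z) ^ (-C)), ← Real.rpow_mul hb0.le, neg_mul]
      _ = ∏ _i ∈ Finset.range (r - k), (ell (k+1) z) ^ (-C) := by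
          rw [Finset.prod_const, Finset.card_range]
      _ ≤ ∏ i ∈ Finset.range (r - k), (ell (k+1+i) z) ^ (γ (k+1+i)) := by
          refine Finset.prod_le_prod (fun i _ => (Real.rpow_pos_of_pos hb0 _).le) fun i hi => ?_
          exact (factor_bound hb1 (hallz i hi).1.le (hallz i hi).2 (hCj i hi)).1
  · calc (∏ i ∈ Finset.range (r - k), (ell (k+1+i) z) ^ (γ (k+1+i)))
        ≤ ∏ _i ∈ Finset.range (r - k), (ell (k+1) z) ^ C := by
          refine Finset.prod_le_prod (fun i hi => Real.rpow_nonneg (by linarith [(hallz i hi).1]) _)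
            fun i hi => (factor_bound hb1 (hallz i hi).1.le (hallz i hi).2 (hCj i hi)).2
      _ = ((ell (k+1) z) ^ C) ^ ((r-k : ℕ)) := by rw [Finset.prod_const, Finset.card_range]
      _ = (ell (k+1) z) ^ (C*((r-k:ℕ):ℝ)) := by
          rw [← Real.rpow_natCast ((ell (k+1) z) ^ C), ← Real.rpow_mul hb0.le]
      _ ≤ (ell (k+1) z) ^ (C*r) := Real.rpow_le_rpow_of_exponent_le hb1
          (mul_le_mul_of_nonneg_left hcast hC0)

/-- If `P_γ` is bounded from above on an interval `(0,d)` (with `d` small enough that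
`ℓ_j > 1` on `(0,d)` for `1 ≤ j ≤ r`), then `P_γ(z)` converges to a real limit as
`z → 0+`, namely `1` if `γ = 0` and `0` otherwise. In particular, if `c ≠ 0` and
`c·P_γ(z) ∈ [-1,1]` on `(0,d)`, then the limit of `P_γ` exists in `ℝ`. -/
theorem Pgamma_bounded_tendsto (r : ℕ) (γ : ℕ → ℝ) (d : ℝ) (hd : d ∈ Set.Ioo (0:ℝ) 1)
    (hsmall : ∀ z ∈ Set.Ioo (0:ℝ) d, ∀ j, 1 ≤ j → j ≤ r → 1 < ell j z) :
    ((∃ M : ℝ, 0 < M ∧ ∀ z ∈ Set.Ioo (0:ℝ) d, Pgamma r γ z ≤ M) →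
      (∃ L : ℝ, Tendsto (Pgamma r γ) (𝓝[>] (0:ℝ)) (𝓝 L)) ∧
      ((∀ j ≤ r, γ j = 0) → Tendsto (Pgamma r γ) (𝓝[>] (0:ℝ)) (𝓝 1)) ∧
      ((∃ j ≤ r, γ j ≠ 0) → Tendsto (Pgamma r γ) (𝓝[>] (0:ℝ)) (𝓝 0))) ∧
    (∀ c : ℝ, c ≠ 0 →
      (∀ z ∈ Set.Ioo (0:ℝ) d, c * Pgamma r γ z ∈ Set.Icc (-1:ℝ) 1) →
      ∃ L : ℝ, Tendsto (Pgamma r γ) (𝓝[>] (0:ℝ)) (𝓝 L)) := by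
  classical
  set C : ℝ := (∑ j ∈ Finset.range (r+1), |γ j|) + 1 with hCdef
  have hCj : ∀ j ≤ r, |γ j| ≤ C := by
    intro j hj
    have h1 : |γ j| ≤ ∑ j ∈ Finset.range (r+1), |γ j| :=
      Finset.single_le_sum (fun i _ => abs_nonneg (γ i)) (Finset.mem_range.2 (by omega))
    linarith
  have hC0 : (0:ℝ) < C := by
    have : (0:ℝ) ≤ ∑ j ∈ Finset.range (r+1), |γ j| :=
      Finset.sum_nonneg fun i _ => abs_nonneg (γ i)
    linarith
  set s : ℝ := C * r with hsdef
  have hs0 : (0:ℝ) ≤ s := mul_nonneg hC0.le (Nat.cast_nonneg r)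
  have hone : (∀ j ≤ r, γ j = 0) → Tendsto (Pgamma r γ) (𝓝[>] (0:ℝ)) (𝓝 1) := by
    intro hz
    have : Pgamma r γ = fun _ => (1:ℝ) := by
      funext z
      refine Finset.prod_eq_one fun j hj => ?_
      rw [hz j (by have := Finset.mem_range.1 hj; omega), Real.rpow_zero]
    rw [this]; exact tendsto_const_nhds
  have hnotTop : (∃ M : ℝ, 0 < M ∧ ∀ z ∈ Set.Ioo (0:ℝ) d, Pgamma r γ z ≤ M) →
      ¬ Tendsto (Pgamma r γ) (𝓝[>] (0:ℝ)) atTop := by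
    rintro ⟨M, _, hMle⟩ h
    have h1 : ∀ᶠ z in 𝓝[>] (0:ℝ), M < Pgamma r γ z := h.eventually_gt_atTop M
    have h2 : Set.Ioo (0:ℝ) d ∈ 𝓝[>] (0:ℝ) := Ioo_mem_nhdsGT_of_mem ⟨le_refl 0, hd.1⟩
    obtain ⟨z, hz1, hz2⟩ := (h1.and h2).exists
    exact absurd (hMle z hz2) (not_le.2 hz1)
  have hmain : (∃ M : ℝ, 0 < M ∧ ∀ z ∈ Set.Ioo (0:ℝ) d, Pgamma r γ z ≤ M) →
      (∃ j ≤ r, γ j ≠ 0) → Tendsto (Pgamma r γ) (𝓝[>] (0:ℝ)) (𝓝 0) := by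
    intro hM hex
    have hexk : ∃ k, γ k ≠ 0 ∧ k ≤ r := by obtain ⟨j, hj1, hj2⟩ := hex; exact ⟨j, hj2, hj1⟩
    obtain ⟨k, hγk, hkr, hzero⟩ : ∃ k, γ k ≠ 0 ∧ k ≤ r ∧ ∀ j < k, γ j = 0 := by
      have h1 := Nat.find_spec hexk
      have h2 := h1.2
      refine ⟨Nat.find hexk, h1.1, h2, fun j hj => ?_⟩
      by_contra hne
      exact Nat.find_min hexk hj ⟨hne, by omega⟩
    have hdecomp : ∀ z, Pgamma r γ z =
        (∏ i ∈ Finset.range (r - k), (ell (k+1+i) z) ^ (γ (k+1+i))) * (ell k z) ^ (γ k) :=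
      fun z => Pgamma_decomp r k γ z hkr hzero
    have hQ := Q_bound r k γ hCj hC0.le
    rcases Nat.eq_zero_or_pos k with hk0 | hkpos
    · -- k = 0, the factor ell k z = z
      subst hk0
      rcases lt_or_gt_of_ne hγk with hneg | hpos
      · -- γ 0 < 0 : Pgamma tends to atTop, contradiction
        refine absurd ?_ (hnotTop hM)
        have hg : Tendsto (fun t : ℝ => (t ^ s * Real.exp (-(-(γ 0)) * t))⁻¹) atTop atTop := by
          refine tendsto_inv_nhdsGT_zero.comp ?_
          refine tendsto_nhdsWithin_of_tendsto_nhds_of_eventually_within _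
            (tendsto_rpow_mul_exp_neg_mul_atTop_nhds_zero s (-(γ 0)) (by linarith)) ?_
          filter_upwards [eventually_gt_atTop (0:ℝ)] with t ht
          exact mul_pos (Real.rpow_pos_of_pos ht _) (Real.exp_pos _)
        refine tendsto_atTop_mono' _ ?_ (hg.comp (ell_succ_tendsto 0))
        filter_upwards [hQ, self_mem_nhdsWithin,
          (ell_succ_tendsto 0).eventually_gt_atTop 1] with z hQz hz0 hA1
        have hz0' : (0:ℝ) < z := hz0
        have hA0 : (0:ℝ) < ell 1 z := one_pos.trans hA1
        have hE : ((ell 1 z) ^ s * Real.exp (-(-(γ 0)) * ell 1 z))⁻¹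
            = (ell 1 z) ^ (-s) * ell 0 z ^ (γ 0) := by
          show _ = (ell 1 z) ^ (-s) * z ^ (γ 0)
          rw [mul_inv, ← Real.rpow_neg hA0.le, ← Real.exp_neg]
          congr 1
          rw [Real.rpow_def_of_pos hz0']
          congr 1
          show -(-(-(γ 0)) * ell 1 z) = Real.log z * γ 0
          have h1 : ell 1 z = -Real.log z := rfl
          rw [h1]; ring
        calc ((ell 1 z) ^ s * Real.exp (-(-(γ 0)) * ell 1 z))⁻¹
            = (ell 1 z) ^ (-s) * ell 0 z ^ (γ 0) := hE
          _ ≤ (∏ i ∈ Finset.range (r - 0), (ell (0+1+i) z) ^ (γ (0+1+i))) * ell 0 z ^ (γ 0) :=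
              mul_le_mul_of_nonneg_right hQz.1 (Real.rpow_nonneg hz0'.le _)
          _ = Pgamma r γ z := (hdecomp z).symm
      · -- γ 0 > 0 : squeeze Pgamma to 0
        have hg : Tendsto (fun z => (ell 1 z) ^ s * Real.exp (-(γ 0) * ell 1 z))
            (𝓝[>] (0:ℝ)) (𝓝 0) :=
          (tendsto_rpow_mul_exp_neg_mul_atTop_nhds_zero s (γ 0) hpos).comp
            (ell_succ_tendsto 0)
        refine squeeze_zero' ?_ ?_ hg
        · filter_upwards [hQ, self_mem_nhdsWithin,
            (ell_succ_tendsto 0).eventually_gt_atTop 1] with z hQz hz0 hA1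
          have hz0' : (0:ℝ) < z := hz0
          have hA0 : (0:ℝ) < ell 1 z := one_pos.trans hA1
          rw [hdecomp z]
          exact mul_nonneg (le_trans (Real.rpow_pos_of_pos hA0 _).le hQz.1)
            (Real.rpow_nonneg hz0'.le _)
        · filter_upwards [hQ, self_mem_nhdsWithin,
            (ell_succ_tendsto 0).eventually_gt_atTop 1] with z hQz hz0 hA1
          have hz0' : (0:ℝ) < z := hz0
          have hE : ell 0 z ^ (γ 0) = Real.exp (-(γ 0) * ell 1 z) := by
            show z ^ (γ 0) = _
            rw [Real.rpow_def_of_pos hz0']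
            congr 1
            show Real.log z * γ 0 = -(γ 0) * ell 1 z
            have h1 : ell 1 z = -Real.log z := rfl
            rw [h1]; ring
          rw [hdecomp z, hE]
          exact mul_le_mul_of_nonneg_right hQz.2 (Real.exp_nonneg _)
    · -- k ≥ 1
      obtain ⟨m, rfl⟩ : ∃ m, k = m + 1 := ⟨k - 1, by omega⟩
      rcases lt_or_gt_of_ne hγk with hneg | hpos
      · -- γ k < 0 : squeeze to 0
        set δ : ℝ := (-(γ (m+1))) / (2*(s+1)) with hδdef
        have hδ : 0 < δ := div_pos (by linarith) (by linarith)
        have hkey : δ * s ≤ (-(γ (m+1))) / 2 := by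
          rw [hδdef, div_mul_eq_mul_div, div_le_div_iff₀ (by linarith) (by norm_num)]
          nlinarith
        have hlog : ∀ᶠ z in 𝓝[>] (0:ℝ), ell (m+1+1) z ≤ (ell (m+1) z) ^ δ :=
          log_le_rpow_event m hδ
        have hlim : Tendsto (fun z => (ell (m+1) z) ^ (γ (m+1) / 2)) (𝓝[>] (0:ℝ)) (𝓝 0) := by
          have := (tendsto_rpow_neg_atTop (y := -(γ (m+1))/2) (by linarith)).comp
            (ell_succ_tendsto m)
          simpa [neg_div, neg_neg, Function.comp_def] using this
        refine squeeze_zero' ?_ ?_ hlim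
        · filter_upwards [hQ, (ell_succ_tendsto m).eventually_gt_atTop 1,
            (ell_succ_tendsto (m+1)).eventually_gt_atTop 1] with z hQz hx1 hB1
          have hB0 : (0:ℝ) < ell (m+1+1) z := one_pos.trans hB1
          rw [hdecomp z]
          exact mul_nonneg (le_trans (Real.rpow_pos_of_pos hB0 _).le hQz.1)
            (Real.rpow_nonneg (by linarith) _)
        · filter_upwards [hQ, hlog, (ell_succ_tendsto m).eventually_gt_atTop 1,
            (ell_succ_tendsto (m+1)).eventually_gt_atTop 1] with z hQz hlz hx1 hB1
          have hx0 : (0:ℝ) < ell (m+1) z := one_pos.trans hx1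
          have hB0 : (0:ℝ) < ell (m+1+1) z := one_pos.trans hB1
          calc Pgamma r γ z
              = (∏ i ∈ Finset.range (r - (m+1)), (ell (m+1+1+i) z) ^ (γ (m+1+1+i)))
                  * (ell (m+1) z) ^ (γ (m+1)) := hdecomp z
            _ ≤ (ell (m+1+1) z) ^ s * (ell (m+1) z) ^ (γ (m+1)) :=
                mul_le_mul_of_nonneg_right hQz.2 (Real.rpow_nonneg hx0.le _)
            _ ≤ ((ell (m+1) z) ^ δ) ^ s * (ell (m+1) z) ^ (γ (m+1)) :=
                mul_le_mul_of_nonneg_right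
                  (Real.rpow_le_rpow hB0.le hlz hs0) (Real.rpow_nonneg hx0.le _)
            _ = (ell (m+1) z) ^ (δ * s + γ (m+1)) := by
                rw [← Real.rpow_mul hx0.le, ← Real.rpow_add hx0]
            _ ≤ (ell (m+1) z) ^ (γ (m+1) / 2) :=
                Real.rpow_le_rpow_of_exponent_le hx1.le (by linarith)
      · -- γ k > 0 : Pgamma tends to atTop, contradiction
        refine absurd ?_ (hnotTop hM)
        set δ : ℝ := (γ (m+1)) / (2*(s+1)) with hδdef
        have hδ : 0 < δ := div_pos (by linarith) (by linarith)
        have hkey : δ * s ≤ (γ (m+1)) / 2 := by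
          rw [hδdef, div_mul_eq_mul_div, div_le_div_iff₀ (by linarith) (by norm_num)]
          nlinarith
        have hlog : ∀ᶠ z in 𝓝[>] (0:ℝ), ell (m+1+1) z ≤ (ell (m+1) z) ^ δ :=
          log_le_rpow_event m hδ
        have hlim : Tendsto (fun z => (ell (m+1) z) ^ (γ (m+1) / 2)) (𝓝[>] (0:ℝ)) atTop :=
          (tendsto_rpow_atTop (by linarith)).comp (ell_succ_tendsto m)
        refine tendsto_atTop_mono' _ ?_ hlim
        filter_upwards [hQ, hlog, (ell_succ_tendsto m).eventually_gt_atTop 1,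
          (ell_succ_tendsto (m+1)).eventually_gt_atTop 1] with z hQz hlz hx1 hB1
        have hx0 : (0:ℝ) < ell (m+1) z := one_pos.trans hx1
        have hB0 : (0:ℝ) < ell (m+1+1) z := one_pos.trans hB1
        calc (ell (m+1) z) ^ (γ (m+1) / 2)
            ≤ (ell (m+1) z) ^ (-(δ * s) + γ (m+1)) :=
              Real.rpow_le_rpow_of_exponent_le hx1.le (by linarith)
          _ = ((ell (m+1) z) ^ δ) ^ (-s) * (ell (m+1) z) ^ (γ (m+1)) := by
              rw [Real.rpow_add hx0, ← Real.rpow_mul hx0.le, mul_neg]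
          _ ≤ (ell (m+1+1) z) ^ (-s) * (ell (m+1) z) ^ (γ (m+1)) :=
              mul_le_mul_of_nonneg_right
                (Real.rpow_le_rpow_of_nonpos hB0 hlz (neg_nonpos.2 hs0))
                (Real.rpow_nonneg hx0.le _)
          _ ≤ (∏ i ∈ Finset.range (r - (m+1)), (ell (m+1+1+i) z) ^ (γ (m+1+1+i)))
                * (ell (m+1) z) ^ (γ (m+1)) :=
              mul_le_mul_of_nonneg_right hQz.1 (Real.rpow_nonneg hx0.le _)
          _ = Pgamma r γ z := (hdecomp z).symm
  have hexL : (∃ M : ℝ, 0 < M ∧ ∀ z ∈ Set.Ioo (0:ℝ) d, Pgamma r γ z ≤ M) →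
      ∃ L : ℝ, Tendsto (Pgamma r γ) (𝓝[>] (0:ℝ)) (𝓝 L) := by
    intro hM
    by_cases hz : ∀ j ≤ r, γ j = 0
    · exact ⟨1, hone hz⟩
    · push_neg at hz
      exact ⟨0, hmain hM hz⟩
  refine ⟨fun hM => ⟨hexL hM, hone, hmain hM⟩, fun c hc hcP => hexL ⟨|c|⁻¹,
    inv_pos.2 (abs_pos.2 hc), fun z hz => ?_⟩⟩
  have h1 : |c * Pgamma r γ z| ≤ 1 := abs_le.2 ⟨(hcP z hz).1, (hcP z hz).2⟩
  rw [abs_mul] at h1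
  have hc0 : (0:ℝ) < |c| := abs_pos.2 hc
  have h2 : |Pgamma r γ z| ≤ |c|⁻¹ := by
    rw [← one_div, le_div_iff₀ hc0]
    calc |Pgamma r γ z| * |c| = |c| * |Pgamma r γ z| := mul_comm _ _
      _ ≤ 1 := h1
  exact le_trans (le_abs_self _) h2
end

section
/- Let r ∈ ℕ_0 and γ = (γ_0,…,γ_r) ∈ ℝ^{r+1}. The function P_γ is bounded on some interval (0,d) with d ∈ (0,1) if and only if either γ = 0, or, denoting by j_0 the least index with γ_{j_0} ≠ 0, one has (j_0 = 0 and γ_0 > 0) or (j_0 ≥ 1 and γ_{j_0} < 0). -/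
open Real Filter Topology

lemma ell_log (k : ℕ) (hk : 1 ≤ k) (z : ℝ) : ell (k+1) z = Real.log (ell k z) := by
  match k, hk with
  | (n+1), _ => rfl

lemma ell_tendsto_atTop (k : ℕ) (hk : 1 ≤ k) :
    Tendsto (fun z => ell k z) (𝓝[>] (0:ℝ)) atTop := by
  induction k with
  | zero => omega
  | succ n ih =>
    rcases Nat.eq_or_lt_of_le hk with h | h
    · obtain rfl : n = 0 := by omega
      have : Tendsto (fun z : ℝ => -Real.log z) (𝓝[>] (0:ℝ)) atTop :=
        tendsto_neg_atBot_atTop.comp Real.tendsto_log_nhdsGT_zero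
      exact this
    · have hn : 1 ≤ n := by omega
      have := Real.tendsto_log_atTop.comp (ih hn)
      refine this.congr fun z => ?_
      simp [Function.comp, ell_log n hn]

lemma ell_pos_eventually (k : ℕ) : ∀ᶠ z in 𝓝[>] (0:ℝ), 0 < ell k z := by
  cases k with
  | zero =>
    filter_upwards [self_mem_nhdsWithin] with z hz
    exact hz
  | succ n => exact (ell_tendsto_atTop (n+1) (by omega)).eventually_gt_atTop 0

lemma ratio_succ (k : ℕ) (hk : 1 ≤ k) :
    Tendsto (fun z => ell (k+1) z / ell k z) (𝓝[>] (0:ℝ)) (𝓝 0) := by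
  have h1 : Tendsto (fun x : ℝ => Real.log x / x) atTop (𝓝 0) := by
    simpa using Real.isLittleO_log_id_atTop.tendsto_div_nhds_zero
  have := h1.comp (ell_tendsto_atTop k hk)
  refine this.congr fun z => ?_
  simp [Function.comp, ell_log k hk]

lemma ratio_lt (k m : ℕ) (hk : 1 ≤ k) (h : k < m) :
    Tendsto (fun z => ell m z / ell k z) (𝓝[>] (0:ℝ)) (𝓝 0) := by
  induction m, h using Nat.le_induction with
  | base => exact ratio_succ k hk
  | succ m hm ih =>
    have hm1 : 1 ≤ m := le_trans hk (by omega)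
    have h2 : Tendsto (fun z => ell (m+1) z / ell m z * (ell m z / ell k z))
        (𝓝[>] (0:ℝ)) (𝓝 0) := by
      simpa using (ratio_succ m hm1).mul ih
    refine h2.congr' ?_
    filter_upwards [(ell_tendsto_atTop m hm1).eventually_gt_atTop 0] with z hz
    rw [div_mul_div_cancel₀]
    exact ne_of_gt hz

lemma bracket_tendsto (r j0 : ℕ) (c : ℕ → ℝ) (hj0 : j0 ≤ r) (hlt : ∀ i < j0, c i = 0) :
    Tendsto (fun z => ∑ j ∈ Finset.range (r+1), c j * (ell (j+1) z / ell (j0+1) z))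
      (𝓝[>] (0:ℝ)) (𝓝 (c j0)) := by
  have hsum : (∑ j ∈ Finset.range (r+1), if j = j0 then c j0 else 0) = c j0 := by
    rw [Finset.sum_ite_eq' (Finset.range (r+1)) j0 (fun _ => c j0)]
    simp [Nat.lt_succ_of_le hj0]
  rw [← hsum]
  refine tendsto_finset_sum _ fun j hj => ?_
  rcases lt_trichotomy j j0 with h | heq | h
  · simp only [Nat.ne_of_lt h, if_neg, hlt j h, zero_mul]
    · exact tendsto_const_nhds
  · subst heq
    simp only [if_pos rfl]
    refine tendsto_const_nhds.congr' ?_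
    filter_upwards [(ell_tendsto_atTop (j+1) (by omega)).eventually_gt_atTop 0] with z hz
    rw [div_self (ne_of_gt hz), mul_one]
    simp
  · simp only [if_neg (Nat.ne_of_gt h)]
    have := (ratio_lt (j0+1) (j+1) (by omega) (by omega)).const_mul (c j)
    simpa using this

lemma sum_tendsto_atTop (r j0 : ℕ) (c : ℕ → ℝ) (hj0 : j0 ≤ r) (hlt : ∀ i < j0, c i = 0)
    (hpos : 0 < c j0) :
    Tendsto (fun z => ∑ j ∈ Finset.range (r+1), c j * ell (j+1) z) (𝓝[>] (0:ℝ)) atTop := by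
  have h := (ell_tendsto_atTop (j0+1) (by omega)).atTop_mul_pos hpos
      (bracket_tendsto r j0 c hj0 hlt)
  refine h.congr' ?_
  filter_upwards [(ell_tendsto_atTop (j0+1) (by omega)).eventually_gt_atTop 0] with z hz
  rw [Finset.mul_sum]
  refine Finset.sum_congr rfl fun j _ => ?_
  field_simp

lemma sum_tendsto_atBot (r j0 : ℕ) (c : ℕ → ℝ) (hj0 : j0 ≤ r) (hlt : ∀ i < j0, c i = 0)
    (hneg : c j0 < 0) :
    Tendsto (fun z => ∑ j ∈ Finset.range (r+1), c j * ell (j+1) z) (𝓝[>] (0:ℝ)) atBot := by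
  have h := (ell_tendsto_atTop (j0+1) (by omega)).atTop_mul_neg hneg
      (bracket_tendsto r j0 c hj0 hlt)
  refine h.congr' ?_
  filter_upwards [(ell_tendsto_atTop (j0+1) (by omega)).eventually_gt_atTop 0] with z hz
  rw [Finset.mul_sum]
  refine Finset.sum_congr rfl fun j _ => ?_
  field_simp

lemma Pgamma_eq_exp (r : ℕ) (γ : ℕ → ℝ) :
    ∀ᶠ z in 𝓝[>] (0:ℝ), Pgamma r γ z =
      Real.exp (∑ j ∈ Finset.range (r+1), (if j = 0 then -(γ 0) else γ j) * ell (j+1) z) := by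
  have hall : ∀ᶠ z in 𝓝[>] (0:ℝ), ∀ j ∈ Finset.range (r+1), 0 < ell j z :=
    (eventually_all_finset _).2 fun j _ => ell_pos_eventually j
  filter_upwards [hall] with z hz
  rw [Pgamma, Real.exp_sum]
  refine Finset.prod_congr rfl fun j hj => ?_
  rw [Real.rpow_def_of_pos (hz j hj)]
  congr 1
  cases j with
  | zero => show Real.log z * γ 0 = -(γ 0) * (-Real.log z); ring
  | succ n => show Real.log (ell (n+1) z) * γ (n+1) = γ (n+1) * ell (n+2) z
              rw [show ell (n+2) z = Real.log (ell (n+1) z) from rfl]; ring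

/-- `P_γ` is bounded on some interval `(0,d)` with `d ∈ (0,1)` if and only if
either `γ = 0` or, denoting by `j₀` the least index with `γ_{j₀} ≠ 0`, one has
`(j₀ = 0 ∧ γ_0 > 0)` or `(j₀ ≥ 1 ∧ γ_{j₀} < 0)`. -/
theorem Pgamma_bounded_iff (r : ℕ) (γ : ℕ → ℝ) :
    (∃ d ∈ Set.Ioo (0:ℝ) 1, ∃ M : ℝ, ∀ z ∈ Set.Ioo (0:ℝ) d, |Pgamma r γ z| ≤ M) ↔
    ((∀ j ≤ r, γ j = 0) ∨
      ∃ j0 ≤ r, γ j0 ≠ 0 ∧ (∀ i < j0, γ i = 0) ∧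
        ((j0 = 0 ∧ 0 < γ 0) ∨ (1 ≤ j0 ∧ γ j0 < 0))) := by
  classical
  set c : ℕ → ℝ := fun j => if j = 0 then -(γ 0) else γ j with hc
  constructor
  · rintro ⟨d, hd, M, hM⟩
    by_cases hall : ∀ j ≤ r, γ j = 0
    · exact Or.inl hall
    right
    push_neg at hall
    have hex : ∃ j, j ≤ r ∧ γ j ≠ 0 := hall
    set j0 := Nat.find hex with hj0def
    have hj0 : j0 ≤ r ∧ γ j0 ≠ 0 := Nat.find_spec hex
    have hmin : ∀ i < j0, γ i = 0 := by
      intro i hi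
      by_contra hne
      exact Nat.find_min hex hi ⟨le_trans (le_of_lt hi) hj0.1, hne⟩
    refine ⟨j0, hj0.1, hj0.2, hmin, ?_⟩
    by_contra hcond
    push_neg at hcond
    have hcpos : 0 < c j0 := by
      rcases Nat.eq_zero_or_pos j0 with h0 | h1
      · have h2 : γ 0 ≤ 0 := hcond.1 h0
        have hne : γ 0 ≠ 0 := h0 ▸ hj0.2
        have : γ 0 < 0 := lt_of_le_of_ne h2 hne
        simp only [hc, h0, if_pos rfl]
        linarith
      · have h2 : 0 ≤ γ j0 := hcond.2 h1
        have : 0 < γ j0 := lt_of_le_of_ne h2 (Ne.symm hj0.2)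
        simpa only [hc, if_neg (by omega : j0 ≠ 0)] using this
    have hclt : ∀ i < j0, c i = 0 := by
      intro i hi
      have h := hmin i hi
      rcases eq_or_ne i 0 with h0 | h0
      · subst h0; simp [hc, h]
      · simp [hc, h0, h]
    have hS := sum_tendsto_atTop r j0 c hj0.1 hclt hcpos
    have hP : Tendsto (Pgamma r γ) (𝓝[>] (0:ℝ)) atTop := by
      refine (Real.tendsto_exp_atTop.comp hS).congr' ?_
      exact (Pgamma_eq_exp r γ).mono fun z hz => hz.symm
    have h1 : ∀ᶠ z in 𝓝[>] (0:ℝ), M < Pgamma r γ z := hP.eventually_gt_atTop M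
    have h2 : ∀ᶠ z in 𝓝[>] (0:ℝ), z ∈ Set.Ioo (0:ℝ) d :=
      Ioo_mem_nhdsGT_of_mem ⟨le_refl 0, hd.1⟩
    obtain ⟨z, hz1, hz2⟩ := (h1.and h2).exists
    exact absurd (hM z hz2) (not_le.mpr (lt_of_lt_of_le hz1 (le_abs_self _)))
  · rintro (hall | ⟨j0, hj0r, hne, hmin, hcond⟩)
    · refine ⟨1/2, by norm_num, 1, fun z hz => ?_⟩
      have hone : Pgamma r γ z = 1 := by
        rw [Pgamma]
        apply Finset.prod_eq_one
        intro j hj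
        rw [hall j (Nat.lt_succ_iff.mp (Finset.mem_range.mp hj)), Real.rpow_zero]
      rw [hone]; norm_num
    · have hcneg : c j0 < 0 := by
        rcases hcond with ⟨h0, hpos⟩ | ⟨h1, hneg⟩
        · simp only [hc, h0, if_pos rfl]; linarith
        · simpa only [hc, if_neg (by omega : j0 ≠ 0)] using hneg
      have hclt : ∀ i < j0, c i = 0 := by
        intro i hi
        have h := hmin i hi
        rcases eq_or_ne i 0 with h0 | h0
        · subst h0; simp [hc, h]
        · simp [hc, h0, h]
      have hS := sum_tendsto_atBot r j0 c hj0r hclt hcneg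
      have hP : Tendsto (Pgamma r γ) (𝓝[>] (0:ℝ)) (𝓝 0) := by
        refine (Real.tendsto_exp_atBot.comp hS).congr' ?_
        exact (Pgamma_eq_exp r γ).mono fun z hz => hz.symm
      have h1 : ∀ᶠ z in 𝓝[>] (0:ℝ), |Pgamma r γ z| ≤ 1 := by
        have h2 := Metric.tendsto_nhds.mp hP 1 one_pos
        filter_upwards [h2] with z hz
        rw [Real.dist_eq, sub_zero] at hz
        exact le_of_lt hz
      obtain ⟨u, hu, hsub⟩ := mem_nhdsGT_iff_exists_Ioo_subset.mp h1
      refine ⟨min u (1/2), ⟨lt_min hu (by norm_num),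
        lt_of_le_of_lt (min_le_right _ _) (by norm_num)⟩, 1, fun z hz => ?_⟩
      exact hsub ⟨hz.1, lt_of_lt_of_le hz.2 (min_le_left _ _)⟩
end
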